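/- Let 𝓗 be a complex Hilbert space, let (Hᵢ)_{i∈ι} be a net of self-adjoint bounded operators on 𝓗, and let H be a self-adjoint bounded operator on 𝓗. If (Hᵢ) converges in the strong operator topology to H, then for every bounded continuous function φ : ℝ → ℝ, the net (φ(Hᵢ)) converges in the strong operator topology to φ(H). -/

import Mathlib

set_option synthInstance.maxHeartbeats 400000
set_option maxHeartbeats 800000
set_option linter.unusedSectionVars false

open Filter Topology

noncomputable abbrev gOne : ℝ → ℝ := fun x => (1 + x ^ 2)⁻¹
noncomputable abbrev gTwo : ℝ → ℝ := fun x => (1 + x ^ 2)⁻¹ * x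

lemma gOne_cont : Continuous gOne := by
  have h : ∀ x : ℝ, 1 + x ^ 2 ≠ 0 := fun x => by positivity
  exact (continuous_const.add (continuous_pow 2)).inv₀ h

lemma gTwo_cont : Continuous gTwo := gOne_cont.mul continuous_id

lemma gOne_bdd : ∀ x : ℝ, |gOne x| ≤ 1 := by
  intro x
  have h1 : (0 : ℝ) < 1 + x ^ 2 := by positivity
  rw [abs_of_pos (by positivity)]
  rw [inv_le_one_iff₀]
  right; nlinarith

section aux
variable {𝓗 : Type*} [NormedAddCommGroup 𝓗] [InnerProductSpace ℂ 𝓗] [CompleteSpace 𝓗]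

-- from chunk 1 (assumed): aux_im, aux_lower, aux_isUnit, aux_inv_norm
lemma aux_im (S : 𝓗 →L[ℂ] 𝓗) (hS : IsSelfAdjoint S) (v : 𝓗) :
    (inner ℂ (S v) v : ℂ).im = 0 := by
  have h1 : starRingEnd ℂ (inner ℂ (S v) v : ℂ) = (inner ℂ (S v) v : ℂ) :=
    (inner_conj_symm _ _).trans (hS.isSymmetric v v).symm
  exact Complex.conj_eq_iff_im.mp h1

lemma aux_lower (S : 𝓗 →L[ℂ] 𝓗) (hS : IsSelfAdjoint S) (c : ℂ) (hre : c.re = 0)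
    (hnorm : 1 ≤ ‖c‖) (v : 𝓗) : ‖v‖ ≤ ‖(S + c • (1 : 𝓗 →L[ℂ] 𝓗)) v‖ := by
  have happ : (S + c • (1 : 𝓗 →L[ℂ] 𝓗)) v = S v + c • v := by simp
  rw [happ]
  have key : ‖S v + c • v‖ ^ 2 = ‖S v‖ ^ 2 + ‖c • v‖ ^ 2 := by
    rw [@norm_add_sq ℂ, inner_smul_right]
    have h0 : RCLike.re (c * inner ℂ (S v) v) = 0 := by
      rw [RCLike.re_to_complex, Complex.mul_re, hre, aux_im S hS v]; ring
    rw [h0]; ring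
  have hcv : ‖v‖ ≤ ‖c • v‖ := by
    rw [norm_smul]
    nlinarith [norm_nonneg v]
  nlinarith [norm_nonneg (S v + c • v), norm_nonneg (S v), norm_nonneg v]

lemma aux_isUnit (S : 𝓗 →L[ℂ] 𝓗) (hS : IsSelfAdjoint S) (c : ℂ) (him : c.im ≠ 0) :
    IsUnit (S + c • (1 : 𝓗 →L[ℂ] 𝓗)) := by
  have h1 : (-c) ∉ spectrum ℂ S := by
    intro hmem
    have := hS.mem_spectrum_eq_re hmem
    have h2 := congrArg Complex.im this
    simp at h2
    exact him h2
  have h3 := spectrum.notMem_iff.mp h1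
  have h4 : (algebraMap ℂ (𝓗 →L[ℂ] 𝓗)) (-c) - S = -(S + c • 1) := by
    rw [Algebra.algebraMap_eq_smul_one]
    module
  rw [h4] at h3
  exact (IsUnit.neg_iff _).mp h3

lemma aux_inv_norm (S : 𝓗 →L[ℂ] 𝓗) (hS : IsSelfAdjoint S) (c : ℂ) (hre : c.re = 0)
    (hnorm : 1 ≤ ‖c‖) (him : c.im ≠ 0) (v : 𝓗) :
    ‖Ring.inverse (S + c • (1 : 𝓗 →L[ℂ] 𝓗)) v‖ ≤ ‖v‖ := by
  have h := aux_lower S hS c hre hnorm (Ring.inverse (S + c • (1 : 𝓗 →L[ℂ] 𝓗)) v)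
  refine h.trans_eq ?_
  rw [← ContinuousLinearMap.mul_apply, Ring.mul_inverse_cancel _ (aux_isUnit S hS c him)]
  simp

lemma cfc_gOne_mul (S : 𝓗 →L[ℂ] 𝓗) (hS : IsSelfAdjoint S) :
    cfc gOne S * (1 + S ^ 2) = 1 := by
  have h1 : (1 : 𝓗 →L[ℂ] 𝓗) + S ^ 2 = cfc (fun x : ℝ => 1 + x ^ 2) S := by
    rw [cfc_const_add 1 (fun x : ℝ => x ^ 2) S ((continuous_pow 2).continuousOn) hS,
      cfc_pow_id S 2 hS]
    simp
  rw [h1, ← cfc_mul gOne (fun x : ℝ => 1 + x ^ 2) S gOne_cont.continuousOn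
    ((continuous_const.add (continuous_pow 2)).continuousOn)]
  have h2 : (fun x : ℝ => gOne x * (1 + x ^ 2)) = fun _ : ℝ => (1 : ℝ) := by
    funext x
    have : (1 : ℝ) + x ^ 2 ≠ 0 := by positivity
    simp [gOne, inv_mul_cancel₀ this]
  rw [h2]
  have := cfc_one (R := ℝ) (a := S) (by exact hS)
  exact this

lemma cfc_gOne_eq (S : 𝓗 →L[ℂ] 𝓗) (hS : IsSelfAdjoint S) :
    cfc gOne S = Ring.inverse (S + (-Complex.I) • (1 : 𝓗 →L[ℂ] 𝓗)) *
      Ring.inverse (S + Complex.I • (1 : 𝓗 →L[ℂ] 𝓗)) := by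
  have hu := aux_isUnit S hS Complex.I (by simp)
  have hw := aux_isUnit S hS (-Complex.I) (by simp)
  have huw : (S + Complex.I • (1 : 𝓗 →L[ℂ] 𝓗)) * (S + (-Complex.I) • 1) = 1 + S ^ 2 := by
    have hJS : (Complex.I • (1 : 𝓗 →L[ℂ] 𝓗)) * S = S * (Complex.I • (1 : 𝓗 →L[ℂ] 𝓗)) := by
      simp [smul_mul_assoc, mul_smul_comm]
    have hJJ : (Complex.I • (1 : 𝓗 →L[ℂ] 𝓗)) * (Complex.I • (1 : 𝓗 →L[ℂ] 𝓗)) = -1 := by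
      simp [smul_mul_assoc, mul_smul_comm, smul_smul, Complex.I_mul_I]
    rw [neg_smul, ← sub_eq_add_neg, add_mul, mul_sub, mul_sub, hJS, hJJ, sq]
    abel
  have h2 : ((1 : 𝓗 →L[ℂ] 𝓗) + S ^ 2) *
      (Ring.inverse (S + (-Complex.I) • (1 : 𝓗 →L[ℂ] 𝓗)) *
        Ring.inverse (S + Complex.I • (1 : 𝓗 →L[ℂ] 𝓗))) = 1 := by
    rw [← huw, mul_assoc (S + Complex.I • (1 : 𝓗 →L[ℂ] 𝓗)),
      ← mul_assoc (S + (-Complex.I) • (1 : 𝓗 →L[ℂ] 𝓗)),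
      Ring.mul_inverse_cancel _ hw, one_mul, Ring.mul_inverse_cancel _ hu]
  calc cfc gOne S = cfc gOne S * (((1 : 𝓗 →L[ℂ] 𝓗) + S ^ 2) *
        (Ring.inverse (S + (-Complex.I) • (1 : 𝓗 →L[ℂ] 𝓗)) *
          Ring.inverse (S + Complex.I • (1 : 𝓗 →L[ℂ] 𝓗)))) := by rw [h2, mul_one]
    _ = (cfc gOne S * ((1 : 𝓗 →L[ℂ] 𝓗) + S ^ 2)) *
        (Ring.inverse (S + (-Complex.I) • (1 : 𝓗 →L[ℂ] 𝓗)) *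
          Ring.inverse (S + Complex.I • (1 : 𝓗 →L[ℂ] 𝓗))) := by rw [mul_assoc]
    _ = _ := by rw [cfc_gOne_mul S hS, one_mul]

variable {ι : Type*} (l : Filter ι) (H : ι → 𝓗 →L[ℂ] 𝓗) (hsa : ∀ i, IsSelfAdjoint (H i))
  (T : 𝓗 →L[ℂ] 𝓗) (hTsa : IsSelfAdjoint T)
  (hSOT : ∀ v : 𝓗, Tendsto (fun i => (H i) v) l (𝓝 (T v)))

include hsa hTsa hSOT

lemma aux_res_tendsto (c : ℂ) (hre : c.re = 0) (hnorm : 1 ≤ ‖c‖) (him : c.im ≠ 0) (v : 𝓗) :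
    Tendsto (fun i => Ring.inverse (H i + c • (1 : 𝓗 →L[ℂ] 𝓗)) v) l
      (𝓝 (Ring.inverse (T + c • (1 : 𝓗 →L[ℂ] 𝓗)) v)) := by
  set w := Ring.inverse (T + c • (1 : 𝓗 →L[ℂ] 𝓗)) v with hw
  have key : ∀ i, Ring.inverse (H i + c • (1 : 𝓗 →L[ℂ] 𝓗)) v - w =
      Ring.inverse (H i + c • (1 : 𝓗 →L[ℂ] 𝓗)) (T w - H i w) := by
    intro i
    have h1 : (T + c • (1 : 𝓗 →L[ℂ] 𝓗)) w = v := by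
      rw [hw, ← ContinuousLinearMap.mul_apply,
        Ring.mul_inverse_cancel _ (aux_isUnit T hTsa c him)]
      simp
    have h2 : Ring.inverse (H i + c • (1 : 𝓗 →L[ℂ] 𝓗)) ((H i + c • (1 : 𝓗 →L[ℂ] 𝓗)) w) = w := by
      rw [← ContinuousLinearMap.mul_apply,
        Ring.inverse_mul_cancel _ (aux_isUnit (H i) (hsa i) c him)]
      simp
    calc Ring.inverse (H i + c • (1 : 𝓗 →L[ℂ] 𝓗)) v - w
        = Ring.inverse (H i + c • (1 : 𝓗 →L[ℂ] 𝓗)) ((T + c • (1 : 𝓗 →L[ℂ] 𝓗)) w) -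
          Ring.inverse (H i + c • (1 : 𝓗 →L[ℂ] 𝓗)) ((H i + c • (1 : 𝓗 →L[ℂ] 𝓗)) w) := by
          rw [h1, h2]
      _ = Ring.inverse (H i + c • (1 : 𝓗 →L[ℂ] 𝓗))
            ((T + c • (1 : 𝓗 →L[ℂ] 𝓗)) w - (H i + c • (1 : 𝓗 →L[ℂ] 𝓗)) w) := (map_sub _ _ _).symm
      _ = Ring.inverse (H i + c • (1 : 𝓗 →L[ℂ] 𝓗)) (T w - H i w) := by
          congr 1
          simp only [ContinuousLinearMap.add_apply, ContinuousLinearMap.smul_apply,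
            ContinuousLinearMap.one_apply]
          abel
  rw [tendsto_iff_norm_sub_tendsto_zero]
  refine squeeze_zero (fun i => norm_nonneg _) (fun i => ?_)
    (g := fun i => ‖T w - H i w‖) ?_
  · rw [key i]
    exact aux_inv_norm (H i) (hsa i) c hre hnorm him _
  · have h3 := hSOT w
    rw [tendsto_iff_norm_sub_tendsto_zero] at h3
    simpa [norm_sub_rev] using h3

lemma P_gOne (v : 𝓗) :
    Tendsto (fun i => cfc gOne (H i) v) l (𝓝 (cfc gOne T v)) := by
  have hrew : ∀ (S : 𝓗 →L[ℂ] 𝓗), IsSelfAdjoint S → cfc gOne S v =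
      Ring.inverse (S + (-Complex.I) • (1 : 𝓗 →L[ℂ] 𝓗))
        (Ring.inverse (S + Complex.I • (1 : 𝓗 →L[ℂ] 𝓗)) v) := by
    intro S hS
    rw [cfc_gOne_eq S hS, ContinuousLinearMap.mul_apply]
  simp only [hrew _ (hsa _), hrew _ hTsa]
  rw [tendsto_iff_norm_sub_tendsto_zero]
  set Rp := fun S : 𝓗 →L[ℂ] 𝓗 => Ring.inverse (S + Complex.I • (1 : 𝓗 →L[ℂ] 𝓗))
  set Rm := fun S : 𝓗 →L[ℂ] 𝓗 => Ring.inverse (S + (-Complex.I) • (1 : 𝓗 →L[ℂ] 𝓗))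
  refine squeeze_zero (fun i => norm_nonneg _) (fun i => ?_)
    (g := fun i => ‖Rp (H i) v - Rp T v‖ + ‖Rm (H i) (Rp T v) - Rm T (Rp T v)‖) ?_
  · have hsplit : Rm (H i) (Rp (H i) v) - Rm T (Rp T v) =
        Rm (H i) (Rp (H i) v - Rp T v) + (Rm (H i) (Rp T v) - Rm T (Rp T v)) := by
      rw [map_sub]; abel
    rw [hsplit]
    refine (norm_add_le _ _).trans ?_
    exact add_le_add_left
      (aux_inv_norm (H i) (hsa i) (-Complex.I) (by simp) (by simp) (by simp) _) _
  · have h1 : Tendsto (fun i => ‖Rp (H i) v - Rp T v‖) l (𝓝 0) := by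
      have := aux_res_tendsto l H hsa T hTsa hSOT Complex.I (by simp) (by simp) (by simp) v
      rwa [tendsto_iff_norm_sub_tendsto_zero] at this
    have h2 : Tendsto (fun i => ‖Rm (H i) (Rp T v) - Rm T (Rp T v)‖) l (𝓝 0) := by
      have := aux_res_tendsto l H hsa T hTsa hSOT (-Complex.I) (by simp) (by simp) (by simp)
        (Rp T v)
      rwa [tendsto_iff_norm_sub_tendsto_zero] at this
    simpa using h1.add h2

end aux

section aux2
variable {𝓗 : Type*} [NormedAddCommGroup 𝓗] [InnerProductSpace ℂ 𝓗] [CompleteSpace 𝓗]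

lemma cfc_bdd (S : 𝓗 →L[ℂ] 𝓗) (f : ℝ → ℝ) {C : ℝ}
    (hC : 0 ≤ C) (hb : ∀ x, |f x| ≤ C) : ‖cfc f S‖ ≤ C :=
  norm_cfc_le hC fun x _ => by rw [Real.norm_eq_abs]; exact hb x

variable {ι : Type*} (l : Filter ι) (H : ι → 𝓗 →L[ℂ] 𝓗) (hsa : ∀ i, IsSelfAdjoint (H i))
  (T : 𝓗 →L[ℂ] 𝓗) (hTsa : IsSelfAdjoint T)
  (hSOT : ∀ v : 𝓗, Tendsto (fun i => (H i) v) l (𝓝 (T v)))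

include hsa hTsa hSOT

lemma P_mul (f g : ℝ → ℝ) (hf : Continuous f) (hg : Continuous g) (Cf : ℝ) (hCf : 0 ≤ Cf)
    (hfb : ∀ x, |f x| ≤ Cf)
    (hPf : ∀ v, Tendsto (fun i => cfc f (H i) v) l (𝓝 (cfc f T v)))
    (hPg : ∀ v, Tendsto (fun i => cfc g (H i) v) l (𝓝 (cfc g T v))) :
    ∀ v, Tendsto (fun i => cfc (fun x => f x * g x) (H i) v) l
      (𝓝 (cfc (fun x => f x * g x) T v)) := by
  intro v
  have hrew : ∀ (S : 𝓗 →L[ℂ] 𝓗), IsSelfAdjoint S →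
      cfc (fun x => f x * g x) S v = cfc f S (cfc g S v) := by
    intro S hS
    rw [cfc_mul f g S hf.continuousOn hg.continuousOn, ContinuousLinearMap.mul_apply]
  simp only [hrew _ (hsa _), hrew _ hTsa]
  rw [tendsto_iff_norm_sub_tendsto_zero]
  refine squeeze_zero (fun i => norm_nonneg _) (fun i => ?_)
    (g := fun i => Cf * ‖cfc g (H i) v - cfc g T v‖ +
      ‖cfc f (H i) (cfc g T v) - cfc f T (cfc g T v)‖) ?_
  · have hsplit : cfc f (H i) (cfc g (H i) v) - cfc f T (cfc g T v) =
        cfc f (H i) (cfc g (H i) v - cfc g T v) +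
          (cfc f (H i) (cfc g T v) - cfc f T (cfc g T v)) := by
      rw [map_sub]; abel
    rw [hsplit]
    refine (norm_add_le _ _).trans (add_le_add_left ?_ _)
    refine ((cfc f (H i)).le_opNorm _).trans ?_
    exact mul_le_mul_of_nonneg_right (cfc_bdd (H i) f hCf hfb) (norm_nonneg _)
  · have h1 : Tendsto (fun i => ‖cfc g (H i) v - cfc g T v‖) l (𝓝 0) := by
      have := hPg v; rwa [tendsto_iff_norm_sub_tendsto_zero] at this
    have h2 : Tendsto (fun i => ‖cfc f (H i) (cfc g T v) - cfc f T (cfc g T v)‖) l (𝓝 0) := by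
      have := hPf (cfc g T v); rwa [tendsto_iff_norm_sub_tendsto_zero] at this
    simpa using (h1.const_mul Cf).add h2

lemma P_gTwo (v : 𝓗) :
    Tendsto (fun i => cfc gTwo (H i) v) l (𝓝 (cfc gTwo T v)) := by
  have hrew : ∀ (S : 𝓗 →L[ℂ] 𝓗), IsSelfAdjoint S → cfc gTwo S v = cfc gOne S (S v) := by
    intro S hS
    have : cfc gTwo S = cfc gOne S * S := by
      have h1 : cfc gTwo S = cfc gOne S * cfc (fun x : ℝ => x) S := by
        rw [← cfc_mul gOne (fun x : ℝ => x) S gOne_cont.continuousOn continuous_id.continuousOn]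
      rw [h1, cfc_id' ℝ S hS]
    rw [this, ContinuousLinearMap.mul_apply]
  simp only [hrew _ (hsa _), hrew _ hTsa]
  rw [tendsto_iff_norm_sub_tendsto_zero]
  refine squeeze_zero (fun i => norm_nonneg _) (fun i => ?_)
    (g := fun i => ‖(H i) v - T v‖ + ‖cfc gOne (H i) (T v) - cfc gOne T (T v)‖) ?_
  · have hsplit : cfc gOne (H i) ((H i) v) - cfc gOne T (T v) =
        cfc gOne (H i) ((H i) v - T v) + (cfc gOne (H i) (T v) - cfc gOne T (T v)) := by
      rw [map_sub]; abel
    rw [hsplit]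
    refine (norm_add_le _ _).trans (add_le_add_left ?_ _)
    refine ((cfc gOne (H i)).le_opNorm _).trans ?_
    calc ‖cfc gOne (H i)‖ * ‖(H i) v - T v‖ ≤ 1 * ‖(H i) v - T v‖ :=
          mul_le_mul_of_nonneg_right (cfc_bdd (H i) gOne zero_le_one gOne_bdd) (norm_nonneg _)
      _ = ‖(H i) v - T v‖ := one_mul _
  · have h1 : Tendsto (fun i => ‖(H i) v - T v‖) l (𝓝 0) := by
      have := hSOT v; rwa [tendsto_iff_norm_sub_tendsto_zero] at this
    have h2 : Tendsto (fun i => ‖cfc gOne (H i) (T v) - cfc gOne T (T v)‖) l (𝓝 0) := by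
      have := P_gOne l H hsa T hTsa hSOT (T v)
      rwa [tendsto_iff_norm_sub_tendsto_zero] at this
    simpa using h1.add h2

lemma P_const (r : ℝ) :
    ∀ v, Tendsto (fun i => cfc (fun _ : ℝ => r) (H i) v) l (𝓝 (cfc (fun _ : ℝ => r) T v)) := by
  intro v
  simp only [cfc_const r _ (hsa _), cfc_const r T hTsa]
  exact tendsto_const_nhds

lemma P_add (f g : ℝ → ℝ) (hf : Continuous f) (hg : Continuous g)
    (hPf : ∀ v, Tendsto (fun i => cfc f (H i) v) l (𝓝 (cfc f T v)))
    (hPg : ∀ v, Tendsto (fun i => cfc g (H i) v) l (𝓝 (cfc g T v))) :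
    ∀ v, Tendsto (fun i => cfc (fun x => f x + g x) (H i) v) l
      (𝓝 (cfc (fun x => f x + g x) T v)) := by
  intro v
  have hrew : ∀ (S : 𝓗 →L[ℂ] 𝓗),
      cfc (fun x => f x + g x) S v = cfc f S v + cfc g S v := by
    intro S
    rw [cfc_add S f g hf.continuousOn hg.continuousOn, ContinuousLinearMap.add_apply]
  simp only [hrew]
  exact (hPf v).add (hPg v)

lemma P_unif (f : ℝ → ℝ) (hf : Continuous f)
    (happrox : ∀ ε : ℝ, 0 < ε → ∃ h : ℝ → ℝ, Continuous h ∧ (∀ x, |f x - h x| ≤ ε) ∧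
      (∀ v, Tendsto (fun i => cfc h (H i) v) l (𝓝 (cfc h T v)))) :
    ∀ v, Tendsto (fun i => cfc f (H i) v) l (𝓝 (cfc f T v)) := by
  intro v
  rw [tendsto_iff_norm_sub_tendsto_zero, NormedAddCommGroup.tendsto_nhds_zero]
  intro ε hε
  have hv1 : (0 : ℝ) < ‖v‖ + 1 := by positivity
  set δ : ℝ := ε / 3 / (‖v‖ + 1) with hδ
  have hδpos : 0 < δ := by positivity
  obtain ⟨h, hhc, hhapprox, hhP⟩ := happrox δ hδpos
  have hdiff : ∀ (S : 𝓗 →L[ℂ] 𝓗), IsSelfAdjoint S → ‖cfc f S - cfc h S‖ ≤ δ := by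
    intro S hS
    rw [← cfc_sub f h S hf.continuousOn hhc.continuousOn]
    exact cfc_bdd S _ hδpos.le hhapprox
  have hbound : ∀ S : 𝓗 →L[ℂ] 𝓗, IsSelfAdjoint S → ‖cfc f S v - cfc h S v‖ ≤ ε / 3 := by
    intro S hS
    have h1 : cfc f S v - cfc h S v = (cfc f S - cfc h S) v := by simp
    rw [h1]
    refine ((cfc f S - cfc h S).le_opNorm v).trans ?_
    calc ‖cfc f S - cfc h S‖ * ‖v‖ ≤ δ * (‖v‖ + 1) :=
          mul_le_mul (hdiff S hS) (by linarith [norm_nonneg v]) (norm_nonneg v) hδpos.le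
      _ = ε / 3 := by rw [hδ]; field_simp
  have hmid : ∀ᶠ i in l, ‖cfc h (H i) v - cfc h T v‖ < ε / 3 := by
    have := hhP v
    rw [tendsto_iff_norm_sub_tendsto_zero, NormedAddCommGroup.tendsto_nhds_zero] at this
    simpa using this (ε / 3) (by positivity)
  filter_upwards [hmid] with i hi
  have htri : ‖cfc f (H i) v - cfc f T v‖ ≤
      ‖cfc f (H i) v - cfc h (H i) v‖ + ‖cfc h (H i) v - cfc h T v‖ +
        ‖cfc h T v - cfc f T v‖ := by
    have := norm_add₃_le (a := cfc f (H i) v - cfc h (H i) v)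
      (b := cfc h (H i) v - cfc h T v) (c := cfc h T v - cfc f T v)
    simpa using this
  rw [Real.norm_eq_abs, abs_of_nonneg (norm_nonneg _)]
  have hb1 := hbound (H i) (hsa i)
  have hb3 : ‖cfc h T v - cfc f T v‖ ≤ ε / 3 := by
    rw [norm_sub_rev]; exact hbound T hTsa
  linarith

end aux2

section sw

def circK : Set (ℝ × ℝ) := {p | p.1 ^ 2 + p.2 ^ 2 = p.1}

lemma circK_isCompact : IsCompact circK := by
  have hclosed : IsClosed circK :=
    isClosed_eq (by fun_prop) (by fun_prop)
  have hbdd : Bornology.IsBounded circK := by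
    refine (Metric.isBounded_closedBall (x := (0 : ℝ × ℝ)) (r := 2)).subset ?_
    intro p hp
    have hp' : p.1 ^ 2 + p.2 ^ 2 = p.1 := hp
    have h1 : p.1 ≤ 1 := by nlinarith [sq_nonneg p.2, sq_nonneg (p.1 - 1)]
    have h0 : 0 ≤ p.1 := by nlinarith [sq_nonneg p.1, sq_nonneg p.2]
    have h2 : |p.2| ≤ 1 := by
      rw [abs_le]; constructor <;> nlinarith [sq_nonneg (p.2 + 1), sq_nonneg (p.2 - 1)]
    simp only [Metric.mem_closedBall, dist_zero_right, Prod.norm_def, Real.norm_eq_abs]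
    rw [sup_le_iff]
    constructor
    · rw [abs_of_nonneg h0]; linarith
    · linarith
  exact Metric.isCompact_of_isClosed_isBounded hclosed hbdd

instance : CompactSpace circK := isCompact_iff_compactSpace.mp circK_isCompact

noncomputable def GG : ℝ → ℝ × ℝ := fun x => (gOne x, gTwo x)

lemma GG_mem (x : ℝ) : GG x ∈ circK := by
  show (gOne x) ^ 2 + (gTwo x) ^ 2 = gOne x
  have h1 : (1 : ℝ) + x ^ 2 ≠ 0 := by positivity
  field_simp [gOne, gTwo]

lemma GG_cont : Continuous GG := gOne_cont.prodMk gTwo_cont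

noncomputable def fstK : C(circK, ℝ) := ⟨fun p => (p : ℝ × ℝ).1,
  continuous_fst.comp continuous_subtype_val⟩
noncomputable def sndK : C(circK, ℝ) := ⟨fun p => (p : ℝ × ℝ).2,
  continuous_snd.comp continuous_subtype_val⟩

lemma circK_separates :
    (Algebra.adjoin ℝ {fstK, sndK} : Subalgebra ℝ C(circK, ℝ)).SeparatesPoints := by
  intro x y hxy
  have hxy' : (x : ℝ × ℝ) ≠ (y : ℝ × ℝ) := fun h => hxy (Subtype.ext h)
  by_cases h1 : (x : ℝ × ℝ).1 = (y : ℝ × ℝ).1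
  · have h2 : (x : ℝ × ℝ).2 ≠ (y : ℝ × ℝ).2 := by
      intro h2; exact hxy' (Prod.ext h1 h2)
    exact ⟨_, ⟨sndK, Algebra.subset_adjoin (by simp), rfl⟩, h2⟩
  · exact ⟨_, ⟨fstK, Algebra.subset_adjoin (by simp), rfl⟩, h1⟩

noncomputable def evalG (q : C(circK, ℝ)) : ℝ → ℝ := fun x => q ⟨GG x, GG_mem x⟩

lemma evalG_cont (q : C(circK, ℝ)) : Continuous (evalG q) :=
  q.continuous.comp (GG_cont.subtype_mk _)

lemma evalG_bdd (q : C(circK, ℝ)) : ∀ x, |evalG q x| ≤ ‖q‖ := fun x => by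
  have := q.norm_coe_le_norm ⟨GG x, GG_mem x⟩
  rwa [Real.norm_eq_abs] at this

end sw

section aux3
variable {𝓗 : Type*} [NormedAddCommGroup 𝓗] [InnerProductSpace ℂ 𝓗] [CompleteSpace 𝓗]
variable {ι : Type*} (l : Filter ι) (H : ι → 𝓗 →L[ℂ] 𝓗) (hsa : ∀ i, IsSelfAdjoint (H i))
  (T : 𝓗 →L[ℂ] 𝓗) (hTsa : IsSelfAdjoint T)
  (hSOT : ∀ v : 𝓗, Tendsto (fun i => (H i) v) l (𝓝 (T v)))

include hsa hTsa hSOT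

lemma P_adjoin (q : C(circK, ℝ)) (hq : q ∈ (Algebra.adjoin ℝ {fstK, sndK} :
      Subalgebra ℝ C(circK, ℝ))) :
    ∀ v, Tendsto (fun i => cfc (evalG q) (H i) v) l (𝓝 (cfc (evalG q) T v)) := by
  induction hq using Algebra.adjoin_induction with
  | mem f hf =>
    rcases hf with rfl | rfl
    · have he : evalG fstK = gOne := rfl
      rw [he]
      exact P_gOne l H hsa T hTsa hSOT
    · have he : evalG sndK = gTwo := rfl
      rw [he]
      exact P_gTwo l H hsa T hTsa hSOT
  | algebraMap r =>
    have he : evalG (algebraMap ℝ C(circK, ℝ) r) = fun _ : ℝ => r := by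
      funext x; simp [evalG]
    rw [he]
    exact P_const l H hsa T hTsa hSOT r
  | add f g _ _ hf hg =>
    have he : evalG (f + g) = fun x => evalG f x + evalG g x := rfl
    rw [he]
    exact P_add l H hsa T hTsa hSOT (fun x => evalG f x) (fun x => evalG g x) (evalG_cont f) (evalG_cont g) hf hg
  | mul f g _ _ hf hg =>
    have he : evalG (f * g) = fun x => evalG f x * evalG g x := rfl
    rw [he]
    exact P_mul l H hsa T hTsa hSOT (fun x => evalG f x) (fun x => evalG g x)
      (evalG_cont f) (evalG_cont g) ‖f‖ (norm_nonneg f) (evalG_bdd f) hf hg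

end aux3

section fcont

lemma F0_continuousOn (φ : ℝ → ℝ) (hφc : Continuous φ) {C : ℝ} (hC : 0 ≤ C)
    (hb : ∀ x, |φ x| ≤ C) :
    ContinuousOn (fun p : ℝ × ℝ => p.1 * φ (p.2 / p.1)) circK := by
  intro p hp
  by_cases hp1 : (p.1 : ℝ) = 0
  · have hp2 : p.2 = 0 := by
      have hp' : p.1 ^ 2 + p.2 ^ 2 = p.1 := hp
      nlinarith [sq_nonneg p.2]
    have hpz : p = ((0 : ℝ), (0 : ℝ)) := by
      rw [Prod.ext_iff]; exact ⟨hp1, hp2⟩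
    subst hpz
    unfold ContinuousWithinAt
    have hF0 : (fun p : ℝ × ℝ => p.1 * φ (p.2 / p.1)) ((0 : ℝ), (0 : ℝ)) = 0 := by simp
    rw [hF0]
    have hbd : ∀ q : ℝ × ℝ, ‖q.1 * φ (q.2 / q.1)‖ ≤ C * |q.1| := by
      intro q
      rw [Real.norm_eq_abs, abs_mul, mul_comm]
      exact mul_le_mul_of_nonneg_right (hb _) (abs_nonneg _)
    have htends : Tendsto (fun q : ℝ × ℝ => C * |q.1|) (nhdsWithin ((0 : ℝ), (0 : ℝ)) circK)
        (nhds 0) := by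
      have hcont : Continuous (fun q : ℝ × ℝ => C * |q.1|) := by fun_prop
      have h5 := hcont.tendsto ((0 : ℝ), (0 : ℝ))
      simp only [abs_zero, mul_zero] at h5
      exact h5.mono_left nhdsWithin_le_nhds
    exact squeeze_zero_norm hbd htends
  · refine ContinuousAt.continuousWithinAt ?_
    exact continuousAt_fst.mul (hφc.continuousAt.comp (continuousAt_snd.div continuousAt_fst hp1))

lemma approxK (φ : ℝ → ℝ) (hφc : Continuous φ) {C : ℝ} (hC : 0 ≤ C) (hb : ∀ x, |φ x| ≤ C)
    (ε : ℝ) (hε : 0 < ε) :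
    ∃ q : C(circK, ℝ), q ∈ (Algebra.adjoin ℝ {fstK, sndK} : Subalgebra ℝ C(circK, ℝ)) ∧
      ∀ x : ℝ, |evalG q x - gOne x * φ x| ≤ ε := by
  set FK : C(circK, ℝ) := ⟨circK.restrict (fun p : ℝ × ℝ => p.1 * φ (p.2 / p.1)),
    (F0_continuousOn φ hφc hC hb).restrict⟩ with hFK
  obtain ⟨⟨q, hqmem⟩, hq⟩ := ContinuousMap.exists_mem_subalgebra_near_continuousMap_of_separatesPoints
    (Algebra.adjoin ℝ {fstK, sndK}) circK_separates FK ε hε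
  refine ⟨q, hqmem, fun x => ?_⟩
  have h1 : ‖(q - FK) ⟨GG x, GG_mem x⟩‖ ≤ ‖q - FK‖ := (q - FK).norm_coe_le_norm _
  have h2 : FK ⟨GG x, GG_mem x⟩ = gOne x * φ x := by
    have hgx : gTwo x / gOne x = x := by
      have h1' : (1 : ℝ) + x ^ 2 ≠ 0 := by positivity
      field_simp [gOne, gTwo]
    show (GG x).1 * φ ((GG x).2 / (GG x).1) = gOne x * φ x
    rw [show (GG x).2 / (GG x).1 = gTwo x / gOne x from rfl, hgx]
    rfl
  have h3 : (q - FK) ⟨GG x, GG_mem x⟩ = evalG q x - gOne x * φ x := by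
    rw [ContinuousMap.sub_apply, h2]; rfl
  rw [h3] at h1
  rw [← Real.norm_eq_abs]
  exact h1.trans hq.le

end fcont

/-- **The operator-theoretic Kaplansky density theorem (Remark 2.6(ii)).** If a net
`(Hᵢ)` of self-adjoint bounded operators converges strongly to a self-adjoint bounded
operator `H`, then `(φ(Hᵢ))` converges strongly to `φ(H)` for every bounded continuous
function `φ : ℝ → ℝ`. -/
theorem stmt_18 {𝓗 : Type*} [NormedAddCommGroup 𝓗] [InnerProductSpace ℂ 𝓗]
    [CompleteSpace 𝓗]
    {ι : Type*} (l : Filter ι)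
    (H : ι → 𝓗 →L[ℂ] 𝓗) (hsa : ∀ i, IsSelfAdjoint (H i))
    (T : 𝓗 →L[ℂ] 𝓗) (hTsa : IsSelfAdjoint T)
    (hSOT : ∀ v : 𝓗, Tendsto (fun i => (H i) v) l (𝓝 (T v)))
    (φ : ℝ → ℝ) (hφc : Continuous φ) (hφb : ∃ C : ℝ, ∀ x : ℝ, |φ x| ≤ C) :
    ∀ v : 𝓗, Tendsto (fun i => (cfc φ (H i)) v) l (𝓝 ((cfc φ T) v)) := by
  obtain ⟨C₀, hC₀⟩ := hφb
  have hC0 : (0 : ℝ) ≤ max C₀ 0 := le_max_right _ _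
  have hb : ∀ x, |φ x| ≤ max C₀ 0 := fun x => (hC₀ x).trans (le_max_left _ _)
  have hfc : Continuous (fun x => gOne x * φ x) := gOne_cont.mul hφc
  have hPf : ∀ v, Tendsto (fun i => cfc (fun x => gOne x * φ x) (H i) v) l
      (𝓝 (cfc (fun x => gOne x * φ x) T v)) := by
    refine P_unif l H hsa T hTsa hSOT _ hfc ?_
    intro ε hε
    obtain ⟨q, hqmem, hqnear⟩ := approxK φ hφc hC0 hb ε hε
    exact ⟨evalG q, evalG_cont q,
      fun x => by have := hqnear x; rw [abs_sub_comm] at this; exact this,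
      P_adjoin l H hsa T hTsa hSOT q hqmem⟩
  intro v
  set w : 𝓗 := ((1 : 𝓗 →L[ℂ] 𝓗) + T ^ 2) v with hw
  have hk2 : cfc gOne T w = v := by
    rw [hw, ← ContinuousLinearMap.mul_apply, cfc_gOne_mul T hTsa]
    simp
  have hk1 : ∀ S : 𝓗 →L[ℂ] 𝓗, IsSelfAdjoint S → ∀ u : 𝓗,
      cfc (fun x => gOne x * φ x) S u = cfc φ S (cfc gOne S u) := by
    intro S hS u
    have h2 : (fun x : ℝ => gOne x * φ x) = fun x => φ x * gOne x := by
      funext x; exact mul_comm _ _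
    rw [h2, cfc_mul φ gOne S hφc.continuousOn gOne_cont.continuousOn,
      ContinuousLinearMap.mul_apply]
  have hk3 : cfc (fun x => gOne x * φ x) T w = cfc φ T v := by
    rw [hk1 T hTsa w, hk2]
  rw [tendsto_iff_norm_sub_tendsto_zero]
  refine squeeze_zero (fun i => norm_nonneg _) (fun i => ?_)
    (g := fun i => max C₀ 0 * ‖v - cfc gOne (H i) w‖ +
      ‖cfc (fun x => gOne x * φ x) (H i) w - cfc (fun x => gOne x * φ x) T w‖) ?_
  · have hsplit : cfc φ (H i) v - cfc φ T v =
        cfc φ (H i) (v - cfc gOne (H i) w) +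
          (cfc (fun x => gOne x * φ x) (H i) w - cfc (fun x => gOne x * φ x) T w) := by
      rw [map_sub, hk1 (H i) (hsa i) w, hk3]
      abel
    rw [hsplit]
    refine (norm_add_le _ _).trans (add_le_add_left ?_ _)
    refine ((cfc φ (H i)).le_opNorm _).trans ?_
    exact mul_le_mul_of_nonneg_right (cfc_bdd (H i) φ hC0 hb) (norm_nonneg _)
  · have h1 : Tendsto (fun i => ‖v - cfc gOne (H i) w‖) l (𝓝 0) := by
      have h1' := P_gOne l H hsa T hTsa hSOT w
      rw [hk2, tendsto_iff_norm_sub_tendsto_zero] at h1'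
      simpa [norm_sub_rev] using h1'
    have h2 : Tendsto (fun i => ‖cfc (fun x => gOne x * φ x) (H i) w -
        cfc (fun x => gOne x * φ x) T w‖) l (𝓝 0) := by
      have := hPf w
      rwa [tendsto_iff_norm_sub_tendsto_zero] at this
    simpa using (h1.const_mul (max C₀ 0)).add h2
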